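/- The functions K₀(s) = (−2 + s·coth(s/2))/(s·sinh(s/2)) and H₀(s,t) = [t(s+t)cosh(s) − s(s+t)cosh(t) + (s−t)(s+t+sinh(s)+sinh(t)−sinh(s+t))] / [s·t·(s+t)·sinh(s/2)·sinh(t/2)·sinh((s+t)/2)²] satisfy, with K̃₀(s) = 4·sinh(s/2)/s·K₀(s) and H̃₀(s,t) = 4·sinh((s+t)/2)/(s+t)·H₀(s,t), the functional identity −(1/2)·H̃₀(s₁,s₂) = (K̃₀(s₂)−K̃₀(s₁))/(s₁+s₂) + (K̃₀(s₁+s₂)−K̃₀(s₂))/s₁ − (K̃₀(s₁+s₂)−K̃₀(s₁))/s₂ for all s₁, s₂ > 0 with s₁ ≠ s₂. -/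

import Mathlib

set_option maxHeartbeats 10000000


/-- The one-variable modular curvature function `K₀`. -/
noncomputable def K0 (s : ℝ) : ℝ :=
  (-2 + s * (Real.cosh (s / 2) / Real.sinh (s / 2))) / (s * Real.sinh (s / 2))

/-- The two-variable modular curvature function `H₀`. -/
noncomputable def H0 (s t : ℝ) : ℝ :=
  (t * (s + t) * Real.cosh s - s * (s + t) * Real.cosh t +
      (s - t) * (s + t + Real.sinh s + Real.sinh t - Real.sinh (s + t))) /
    (s * t * (s + t) * Real.sinh (s / 2) * Real.sinh (t / 2) * Real.sinh ((s + t) / 2) ^ 2)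

/-- `K̃₀(s) = 4·(sinh(s/2)/s)·K₀(s)`. -/
noncomputable def Ktilde0 (s : ℝ) : ℝ := 4 * (Real.sinh (s / 2) / s) * K0 s

/-- `H̃₀(s,t) = 4·(sinh((s+t)/2)/(s+t))·H₀(s,t)`. -/
noncomputable def Htilde0 (s t : ℝ) : ℝ := 4 * (Real.sinh ((s + t) / 2) / (s + t)) * H0 s t

lemma exp_sq_ne_one {s : ℝ} (hs : 0 < s) : Real.exp (s / 2) ^ 2 ≠ 1 := by
  have h1 : (1:ℝ) < Real.exp (s / 2) := Real.one_lt_exp_iff.mpr (by linarith)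
  nlinarith

lemma sinh_half_eq (s : ℝ) : Real.sinh (s / 2) =
    (Real.exp (s / 2) ^ 2 - 1) / (2 * Real.exp (s / 2)) := by
  rw [Real.sinh_eq, Real.exp_neg]
  have h : Real.exp (s / 2) ≠ 0 := (Real.exp_pos _).ne'
  field_simp

lemma cosh_half_eq (s : ℝ) : Real.cosh (s / 2) =
    (Real.exp (s / 2) ^ 2 + 1) / (2 * Real.exp (s / 2)) := by
  rw [Real.cosh_eq, Real.exp_neg]
  have h : Real.exp (s / 2) ≠ 0 := (Real.exp_pos _).ne'
  field_simp

lemma sinh_full_eq (s : ℝ) : Real.sinh s =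
    (Real.exp (s / 2) ^ 4 - 1) / (2 * Real.exp (s / 2) ^ 2) := by
  rw [Real.sinh_eq, Real.exp_neg, show s = s / 2 + s / 2 by ring, Real.exp_add]
  have h : Real.exp (s / 2) ≠ 0 := (Real.exp_pos _).ne'
  field_simp
  ring

lemma cosh_full_eq (s : ℝ) : Real.cosh s =
    (Real.exp (s / 2) ^ 4 + 1) / (2 * Real.exp (s / 2) ^ 2) := by
  rw [Real.cosh_eq, Real.exp_neg, show s = s / 2 + s / 2 by ring, Real.exp_add]
  have h : Real.exp (s / 2) ≠ 0 := (Real.exp_pos _).ne'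
  field_simp
  ring

/-- Clean rational form of `Ktilde0`. -/
lemma Ktilde0_eq {s : ℝ} (hs : 0 < s) :
    Ktilde0 s = 4 * (s * (Real.exp (s / 2) ^ 2 + 1) - 2 * (Real.exp (s / 2) ^ 2 - 1)) /
      (s ^ 2 * (Real.exp (s / 2) ^ 2 - 1)) := by
  have hs0 : s ≠ 0 := hs.ne'
  have he : Real.exp (s / 2) ≠ 0 := (Real.exp_pos _).ne'
  have h1 : Real.exp (s / 2) ^ 2 - 1 ≠ 0 := sub_ne_zero.mpr (exp_sq_ne_one hs)
  rw [Ktilde0, K0, sinh_half_eq, cosh_half_eq]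
  field_simp
  ring

/-- The functional identity relating the two curvature-defining functions of the
modular Gaussian curvature of the noncommutative torus. -/
theorem modular_curvature_functional_identity (s₁ s₂ : ℝ)
    (h₁ : 0 < s₁) (h₂ : 0 < s₂) (hne : s₁ ≠ s₂) :
    -(1 / 2) * Htilde0 s₁ s₂ =
      (Ktilde0 s₂ - Ktilde0 s₁) / (s₁ + s₂) +
        (Ktilde0 (s₁ + s₂) - Ktilde0 s₂) / s₁ -
          (Ktilde0 (s₁ + s₂) - Ktilde0 s₁) / s₂ := by
  have h₁₂ : 0 < s₁ + s₂ := add_pos h₁ h₂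
  have hs1 : s₁ ≠ 0 := h₁.ne'
  have hs2 : s₂ ≠ 0 := h₂.ne'
  have hs12 : s₁ + s₂ ≠ 0 := h₁₂.ne'
  set u : ℝ := Real.exp (s₁ / 2) with hu
  set v : ℝ := Real.exp (s₂ / 2) with hv
  have hu0 : u ≠ 0 := (Real.exp_pos _).ne'
  have hv0 : v ≠ 0 := (Real.exp_pos _).ne'
  have hu1 : u ^ 2 - 1 ≠ 0 := sub_ne_zero.mpr (exp_sq_ne_one h₁)
  have hv1 : v ^ 2 - 1 ≠ 0 := sub_ne_zero.mpr (exp_sq_ne_one h₂)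
  have huv : Real.exp ((s₁ + s₂) / 2) = u * v := by
    rw [show (s₁ + s₂) / 2 = s₁ / 2 + s₂ / 2 by ring, Real.exp_add, hu, hv]
  have huv1 : u ^ 2 * v ^ 2 - 1 ≠ 0 := by
    have := exp_sq_ne_one h₁₂
    rw [huv] at this
    intro h; exact this (by nlinarith)
  -- clean form of Htilde0
  have hH : Htilde0 s₁ s₂ = 16 *
      (s₂ * (s₁ + s₂) * v ^ 2 * (u ^ 4 + 1) - s₁ * (s₁ + s₂) * u ^ 2 * (v ^ 4 + 1) +
        (s₁ - s₂) * (2 * u ^ 2 * v ^ 2 * (s₁ + s₂) + v ^ 2 * (u ^ 4 - 1) + u ^ 2 * (v ^ 4 - 1) -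
          (u ^ 4 * v ^ 4 - 1))) /
      (s₁ * s₂ * (s₁ + s₂) ^ 2 * (u ^ 2 - 1) * (v ^ 2 - 1) * (u ^ 2 * v ^ 2 - 1)) := by
    have hsh1 : Real.sinh (s₁ / 2) ≠ 0 := (Real.sinh_pos_iff.mpr (by linarith)).ne'
    have hsh2 : Real.sinh (s₂ / 2) ≠ 0 := (Real.sinh_pos_iff.mpr (by linarith)).ne'
    have hsh12 : Real.sinh ((s₁ + s₂) / 2) ≠ 0 := (Real.sinh_pos_iff.mpr (by linarith)).ne'
    have step1 : Htilde0 s₁ s₂ =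
        (4 * Real.sinh ((s₁ + s₂) / 2) *
          (s₂ * (s₁ + s₂) * Real.cosh s₁ - s₁ * (s₁ + s₂) * Real.cosh s₂ +
            (s₁ - s₂) * (s₁ + s₂ + Real.sinh s₁ + Real.sinh s₂ - Real.sinh (s₁ + s₂)))) /
        ((s₁ + s₂) * (s₁ * s₂ * (s₁ + s₂) * Real.sinh (s₁ / 2) * Real.sinh (s₂ / 2) *
          Real.sinh ((s₁ + s₂) / 2) ^ 2)) := by
      rw [Htilde0, H0]
      field_simp
    rw [step1, div_eq_div_iff (by positivity) (by
      have h16 : u ^ 2 * v ^ 2 - 1 ≠ 0 := huv1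
      exact mul_ne_zero (mul_ne_zero (mul_ne_zero (mul_ne_zero (mul_ne_zero hs1 hs2)
        (pow_ne_zero 2 hs12)) hu1) hv1) h16)]
    rw [sinh_half_eq s₁, sinh_half_eq s₂, sinh_half_eq (s₁ + s₂),
      sinh_full_eq s₁, sinh_full_eq s₂, sinh_full_eq (s₁ + s₂),
      cosh_full_eq s₁, cosh_full_eq s₂, huv, ← hu, ← hv]
    field_simp
    ring
  rw [hH, Ktilde0_eq h₁, Ktilde0_eq h₂, Ktilde0_eq h₁₂, huv, ← hu, ← hv]
  have hD1 : s₁ ^ 2 * (u ^ 2 - 1) ≠ 0 := mul_ne_zero (pow_ne_zero 2 hs1) hu1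
  have hD2 : s₂ ^ 2 * (v ^ 2 - 1) ≠ 0 := mul_ne_zero (pow_ne_zero 2 hs2) hv1
  have hD3 : (s₁ + s₂) ^ 2 * ((u * v) ^ 2 - 1) ≠ 0 := by
    refine mul_ne_zero (pow_ne_zero 2 hs12) ?_
    intro h; apply huv1; rw [← h]; ring
  have hDH : s₁ * s₂ * (s₁ + s₂) ^ 2 * (u ^ 2 - 1) * (v ^ 2 - 1) * (u ^ 2 * v ^ 2 - 1) ≠ 0 :=
    mul_ne_zero (mul_ne_zero (mul_ne_zero (mul_ne_zero (mul_ne_zero hs1 hs2)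
      (pow_ne_zero 2 hs12)) hu1) hv1) huv1
  rw [div_sub_div _ _ hD2 hD1, div_sub_div _ _ hD3 hD2, div_sub_div _ _ hD3 hD1,
    div_div, div_div, div_div,
    div_add_div _ _ (mul_ne_zero (mul_ne_zero hD2 hD1) hs12)
      (mul_ne_zero (mul_ne_zero hD3 hD2) hs1),
    div_sub_div _ _ (mul_ne_zero (mul_ne_zero (mul_ne_zero hD2 hD1) hs12)
      (mul_ne_zero (mul_ne_zero hD3 hD2) hs1)) (mul_ne_zero (mul_ne_zero hD3 hD1) hs2),
    ← mul_div_assoc, div_eq_div_iff hDH (by positivity)]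
  ring
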